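/- arXiv:1605.07545 — 3 statements merged into one kernel-verified Lean document; each statement's English description precedes it below -/
import Mathlib

section
/- Suppose e^A is a semisimple matrix in SL(4,ℤ) with four distinct real eigenvalues, all positive and none equal to 1, where A is a real 4×4 matrix. Then the group ℤ⁴ ⋊ ℤ, with ℤ acting on ℤ⁴ by powers of e^A, embeds as a discrete cocompact subgroup (lattice) in ℝ⁴ ⋊ ℝ where t acts by exp(tA). -/
open MeasureTheory

variable (A : Matrix (Fin 4) (Fin 4) ℝ)

/-- The one-parameter group `t ↦ exp (t A)` of matrices. -/
noncomputable def expT (t : ℝ) : Matrix (Fin 4) (Fin 4) ℝ :=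
  NormedSpace.exp (t • A)

theorem expT_add (s t : ℝ) : expT A (s + t) = expT A s * expT A t := by
  rw [expT, expT, expT, add_smul]
  exact Matrix.exp_add_of_commute _ _ (((Commute.refl A).smul_left s).smul_right t)

@[simp]
theorem expT_zero : expT A 0 = 1 := by
  rw [expT, zero_smul]
  exact NormedSpace.exp_zero

/-- The semidirect product `ℝ⁴ ⋊ ℝ` where `t ∈ ℝ` acts on `ℝ⁴` by `exp (t A)`,
with multiplication `(v,s)(w,t) = (v + exp(sA) w, s + t)`. -/
def GA (_A : Matrix (Fin 4) (Fin 4) ℝ) : Type :=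
  (Fin 4 → ℝ) × ℝ

namespace GA

noncomputable instance : Mul (GA A) :=
  ⟨fun a b => ((a.1 + (expT A a.2).mulVec b.1 : Fin 4 → ℝ), a.2 + b.2)⟩

instance : One (GA A) := ⟨((0 : Fin 4 → ℝ), (0 : ℝ))⟩

noncomputable instance : Inv (GA A) :=
  ⟨fun a => (-(expT A (-a.2)).mulVec a.1, -a.2)⟩

variable {A}

@[simp] theorem mul_fst (a b : GA A) :
    (a * b).1 = a.1 + (expT A a.2).mulVec b.1 := rfl
@[simp] theorem mul_snd (a b : GA A) : (a * b).2 = a.2 + b.2 := rfl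
@[simp] theorem one_fst : (1 : GA A).1 = 0 := rfl
@[simp] theorem one_snd : (1 : GA A).2 = 0 := rfl
@[simp] theorem inv_fst (a : GA A) : (a⁻¹).1 = -(expT A (-a.2)).mulVec a.1 := rfl
@[simp] theorem inv_snd (a : GA A) : (a⁻¹).2 = -a.2 := rfl

noncomputable instance : Group (GA A) where
  mul_assoc a b c := by
    refine Prod.ext ?_ ?_
    · simp [Matrix.mulVec_add, Matrix.mulVec_mulVec, expT_add, add_assoc]
    · simp [add_assoc]
  one_mul a := by
    refine Prod.ext ?_ ?_ <;> simp
  mul_one a := by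
    refine Prod.ext ?_ ?_ <;> simp
  inv_mul_cancel a := by
    refine Prod.ext ?_ ?_ <;> simp

end GA

instance : TopologicalSpace (GA A) := inferInstanceAs (TopologicalSpace ((Fin 4 → ℝ) × ℝ))

noncomputable instance : MeasurableSpace (GA A) := borel (GA A)


section
attribute [local instance] Matrix.linftyOpNormedRing Matrix.linftyOpNormedAlgebra
theorem expT_cont (A : Matrix (Fin 4) (Fin 4) ℝ) : Continuous (expT A) := by
  unfold expT
  exact NormedSpace.exp_continuous.comp (continuous_id.smul continuous_const)
end

theorem aux_discrete {X : Type*} [MetricSpace X] {s : Set X}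
    (h : ∀ x ∈ s, ∀ y ∈ s, x ≠ y → 1 ≤ dist x y) : DiscreteTopology s := by
  rw [discreteTopology_iff_isOpen_singleton]
  rintro ⟨x, hx⟩
  have heq : ({⟨x, hx⟩} : Set s) = Subtype.val ⁻¹' Metric.ball x 1 := by
    ext ⟨y, hy⟩
    simp only [Set.mem_singleton_iff, Set.mem_preimage, Metric.mem_ball, Subtype.ext_iff]
    constructor
    · rintro rfl; simp
    · intro hd
      by_contra hne
      exact absurd hd (not_lt.mpr (by
        calc (1:ℝ) ≤ dist x y := h x hx y hy (fun h' => hne h'.symm)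
        _ = dist y x := dist_comm x y))
  rw [heq]
  exact Metric.isOpen_ball.preimage continuous_subtype_val

/-- If `e^A ∈ SL(4,ℤ)` is semisimple with four distinct positive real eigenvalues, none
equal to `1`, then `ℤ⁴ ⋊ ℤ` (the integer points) is a discrete cocompact subgroup —
a lattice — in `ℝ⁴ ⋊ ℝ`, where `t` acts by `exp (tA)`. -/
theorem stmt_11 (A : Matrix (Fin 4) (Fin 4) ℝ)
    (B : Matrix (Fin 4) (Fin 4) ℤ)
    (hB : B.map (Int.cast : ℤ → ℝ) = NormedSpace.exp A)
    (hdet : B.det = 1)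
    (hss : Module.End.IsSemisimple (R := ℝ) (M := Fin 4 → ℝ) (Matrix.mulVecLin (NormedSpace.exp A)))
    (μ : Fin 4 → ℝ) (hinj : Function.Injective μ)
    (hpos : ∀ i, 0 < μ i) (hne1 : ∀ i, μ i ≠ 1)
    (heig : ∀ i, Module.End.HasEigenvalue (Matrix.mulVecLin (NormedSpace.exp A)) (μ i)) :
    ∃ H : Subgroup (GA A),
      (H : Set (GA A)) =
        {g : GA A | (∃ m : Fin 4 → ℤ, g.1 = fun i => (m i : ℝ)) ∧ ∃ k : ℤ, g.2 = (k : ℝ)} ∧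
      DiscreteTopology H ∧ CompactSpace (GA A ⧸ H) := by
  classical
  set φ : Matrix (Fin 4) (Fin 4) ℤ →+* Matrix (Fin 4) (Fin 4) ℝ := (Int.castRingHom ℝ).mapMatrix with hφ
  have hBunit : IsUnit B := (Matrix.isUnit_iff_isUnit_det B).mpr (by rw [hdet]; exact isUnit_one)
  obtain ⟨u, hu⟩ := hBunit
  set U : (Matrix (Fin 4) (Fin 4) ℝ)ˣ := Units.map φ.toMonoidHom u with hU
  have hUcoe : (U : Matrix (Fin 4) (Fin 4) ℝ) = NormedSpace.exp A := by
    rw [hU, Units.coe_map, hu]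
    simpa [hφ, RingHom.mapMatrix_apply] using hB
  have hexp1 : expT A 1 = (U : Matrix (Fin 4) (Fin 4) ℝ) := by
    rw [expT, one_smul, hUcoe]
  have hm1 : expT A (-1) = ((U⁻¹ : (Matrix (Fin 4) (Fin 4) ℝ)ˣ) : Matrix (Fin 4) (Fin 4) ℝ) := by
    have h1 : expT A (-1) * expT A 1 = 1 := by
      rw [← expT_add]; norm_num
    calc expT A (-1) = expT A (-1) * ((U : Matrix (Fin 4) (Fin 4) ℝ) * ↑U⁻¹) := by
          rw [Units.mul_inv, mul_one]
      _ = (expT A (-1) * expT A 1) * ↑U⁻¹ := by rw [hexp1, mul_assoc]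
      _ = ↑U⁻¹ := by rw [h1, one_mul]
  have key : ∀ k : ℤ, expT A (k : ℝ) = ((U ^ k : (Matrix (Fin 4) (Fin 4) ℝ)ˣ) : Matrix (Fin 4) (Fin 4) ℝ) := by
    intro k
    induction k using Int.induction_on with
    | zero => simp
    | succ n ih =>
        have hc : (((n : ℤ) + 1 : ℤ) : ℝ) = ((n : ℤ) : ℝ) + 1 := by push_cast; ring
        rw [hc, expT_add, ih, hexp1, zpow_add_one, Units.val_mul]
    | pred n ih =>
        have hc : ((-(n : ℤ) - 1 : ℤ) : ℝ) = ((-(n : ℤ) : ℤ) : ℝ) + (-1) := by push_cast; ring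
        rw [hc, expT_add, ih, hm1, zpow_sub_one, Units.val_mul]
  have hZ : ∀ (k : ℤ) (n : Fin 4 → ℤ),
      (expT A (k : ℝ)).mulVec (fun i => (n i : ℝ)) =
        fun i => ((((u ^ k : (Matrix (Fin 4) (Fin 4) ℤ)ˣ) : Matrix (Fin 4) (Fin 4) ℤ).mulVec n) i : ℝ) := by
    intro k n
    have hUk : ((U ^ k : (Matrix (Fin 4) (Fin 4) ℝ)ˣ) : Matrix (Fin 4) (Fin 4) ℝ)
        = φ ((u ^ k : (Matrix (Fin 4) (Fin 4) ℤ)ˣ) : Matrix (Fin 4) (Fin 4) ℤ) := by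
      rw [hU, ← map_zpow, Units.coe_map]; rfl
    funext i
    rw [key, hUk]
    have := RingHom.map_mulVec (Int.castRingHom ℝ) ((u ^ k : (Matrix (Fin 4) (Fin 4) ℤ)ˣ) : Matrix (Fin 4) (Fin 4) ℤ) n i
    simpa [hφ, RingHom.mapMatrix_apply, Function.comp_def] using this.symm
  set S : Set (GA A) := {g : GA A | (∃ m : Fin 4 → ℤ, g.1 = fun i => (m i : ℝ)) ∧ ∃ k : ℤ, g.2 = (k : ℝ)} with hS
  have hmul : ∀ a ∈ S, ∀ b ∈ S, a * b ∈ S := by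
    rintro a ⟨⟨m, hm⟩, k, hk⟩ b ⟨⟨n, hn⟩, l, hl⟩
    refine ⟨⟨m + ((u ^ k : (Matrix (Fin 4) (Fin 4) ℤ)ˣ) : Matrix (Fin 4) (Fin 4) ℤ).mulVec n, ?_⟩, k + l, ?_⟩
    · show a.1 + (expT A a.2).mulVec b.1 = _
      rw [hm, hk, hn, hZ k n]
      funext i
      simp only [Pi.add_apply]
      push_cast
      ring
    · show a.2 + b.2 = _
      rw [hk, hl]; push_cast; ring
  have hinvS : ∀ a ∈ S, a⁻¹ ∈ S := by
    rintro a ⟨⟨m, hm⟩, k, hk⟩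
    refine ⟨⟨-(((u ^ (-k) : (Matrix (Fin 4) (Fin 4) ℤ)ˣ) : Matrix (Fin 4) (Fin 4) ℤ).mulVec m), ?_⟩, -k, ?_⟩
    · show -(expT A (-a.2)).mulVec a.1 = _
      rw [hm, hk]
      have hc : -((k : ℤ) : ℝ) = ((-k : ℤ) : ℝ) := by push_cast; ring
      rw [hc, hZ (-k) m]
      funext i
      simp only [Pi.neg_apply]
      push_cast
      ring
    · show -a.2 = _
      rw [hk]; push_cast; ring
  have honeS : (1 : GA A) ∈ S := ⟨⟨0, by funext i; simp⟩, 0, by simp⟩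
  set HH : Subgroup (GA A) :=
    { carrier := S
      mul_mem' := fun {a} {b} ha hb => hmul a ha b hb
      one_mem' := honeS
      inv_mem' := fun {a} ha => hinvS a ha } with hHH
  have hsep : ∀ x ∈ {p : (Fin 4 → ℝ) × ℝ | (∃ m : Fin 4 → ℤ, p.1 = fun i => (m i : ℝ)) ∧ ∃ k : ℤ, p.2 = (k : ℝ)},
      ∀ y ∈ {p : (Fin 4 → ℝ) × ℝ | (∃ m : Fin 4 → ℤ, p.1 = fun i => (m i : ℝ)) ∧ ∃ k : ℤ, p.2 = (k : ℝ)},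
      x ≠ y → 1 ≤ dist x y := by
    rintro x ⟨⟨m, hm⟩, k, hk⟩ y ⟨⟨n, hn⟩, l, hl⟩ hne
    by_cases hkl : k = l
    · have h1 : x.1 ≠ y.1 := by
        intro h
        exact hne (Prod.ext h (by rw [hk, hl, hkl]))
      have h2 : ∃ i, m i ≠ n i := by
        by_contra hc
        push_neg at hc
        exact h1 (by rw [hm, hn]; funext i; rw [hc i])
      obtain ⟨i, hi⟩ := h2
      have hmi : x.1 i = (m i : ℝ) := by rw [hm]
      have hni : y.1 i = (n i : ℝ) := by rw [hn]
      have h4 : (1 : ℤ) ≤ |m i - n i| := Int.one_le_abs (sub_ne_zero.mpr hi)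
      have h3 : (1 : ℝ) ≤ dist (x.1 i) (y.1 i) := by
        rw [hmi, hni, Real.dist_eq]
        exact_mod_cast h4
      calc (1 : ℝ) ≤ dist (x.1 i) (y.1 i) := h3
        _ ≤ dist x.1 y.1 := dist_le_pi_dist x.1 y.1 i
        _ ≤ dist x y := by rw [Prod.dist_eq]; exact le_max_left _ _
    · have h4 : (1 : ℤ) ≤ |k - l| := Int.one_le_abs (sub_ne_zero.mpr hkl)
      have h3 : (1 : ℝ) ≤ dist x.2 y.2 := by
        rw [hk, hl, Real.dist_eq]
        exact_mod_cast h4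
      calc (1 : ℝ) ≤ dist x.2 y.2 := h3
        _ ≤ dist x y := by rw [Prod.dist_eq]; exact le_max_right _ _
  refine ⟨HH, rfl, ?_, ?_⟩
  · exact aux_discrete (X := (Fin 4 → ℝ) × ℝ)
      (s := {p : (Fin 4 → ℝ) × ℝ | (∃ m : Fin 4 → ℤ, p.1 = fun i => (m i : ℝ)) ∧ ∃ k : ℤ, p.2 = (k : ℝ)}) hsep
  · -- cocompactness
    have hcont : Continuous (fun p : (Fin 4 → ℝ) × ℝ => (((expT A p.2).mulVec p.1, p.2) : (Fin 4 → ℝ) × ℝ)) := by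
      refine Continuous.prodMk ?_ continuous_snd
      refine continuous_pi fun i => ?_
      simp only [Matrix.mulVec, dotProduct]
      exact continuous_finset_sum _ fun j _ =>
        (((continuous_apply_apply i j).comp (expT_cont A)).comp continuous_snd).mul
          ((continuous_apply j).comp continuous_fst)
    set K : Set (GA A) := (fun p : (Fin 4 → ℝ) × ℝ => (((expT A p.2).mulVec p.1, p.2) : (Fin 4 → ℝ) × ℝ)) ''
        ((Set.pi Set.univ fun _ : Fin 4 => Set.Icc (0:ℝ) 1) ×ˢ Set.Icc (0:ℝ) 1) with hKdef
    have hKc : IsCompact K := ((isCompact_univ_pi fun _ => isCompact_Icc).prod isCompact_Icc).image hcont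
    have hsurj : ∀ g : GA A, ∃ x ∈ K,
        QuotientGroup.mk (s := HH) x = QuotientGroup.mk g := by
      intro g
      set v : Fin 4 → ℝ := g.1 with hv
      set s : ℝ := g.2 with hsdef
      set s₀ := Int.fract s with hs₀
      set nn : ℤ := ⌊s⌋ with hnn
      set x : Fin 4 → ℝ := (expT A (-s₀)).mulVec v with hx
      set w : Fin 4 → ℤ := fun i => -⌊x i⌋ with hw
      set mm : Fin 4 → ℤ := ((u ^ (-nn) : (Matrix (Fin 4) (Fin 4) ℤ)ˣ) : Matrix (Fin 4) (Fin 4) ℤ).mulVec w with hmm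
      set h : GA A := ((fun i => (mm i : ℝ)), ((-nn : ℤ) : ℝ)) with hh
      have hhH : h ∈ HH := ⟨⟨mm, rfl⟩, -nn, rfl⟩
      refine ⟨g * h, ⟨((fun i => Int.fract (x i)), s₀), ⟨?_, ?_⟩, ?_⟩,
        QuotientGroup.mk_mul_of_mem _ hhH⟩
      · intro i _
        exact ⟨Int.fract_nonneg _, (Int.fract_lt_one _).le⟩
      · exact ⟨Int.fract_nonneg s, (Int.fract_lt_one s).le⟩
      · have e1 : (expT A ((nn : ℤ) : ℝ)).mulVec (fun i => (mm i : ℝ)) = fun i => (w i : ℝ) := by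
          rw [hZ nn mm]
          have e0 : ((u ^ nn : (Matrix (Fin 4) (Fin 4) ℤ)ˣ) : Matrix (Fin 4) (Fin 4) ℤ).mulVec mm = w := by
            rw [hmm, Matrix.mulVec_mulVec, ← Units.val_mul, ← zpow_add, add_neg_cancel,
              zpow_zero, Units.val_one, Matrix.one_mulVec]
          rw [e0]
        have e2 : s = s₀ + (nn : ℝ) := by
          rw [hs₀, hnn]
          exact (Int.fract_add_floor s).symm
        have hxv : (expT A s₀).mulVec x = v := by
          rw [hx, Matrix.mulVec_mulVec, ← expT_add, add_neg_cancel, expT_zero, Matrix.one_mulVec]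
        have hvec : (x + fun i => ((w i : ℤ) : ℝ)) = fun i => Int.fract (x i) := by
          funext i
          simp only [Pi.add_apply, hw]
          push_cast
          rw [← Int.self_sub_floor]
          ring
        have efst : v + (expT A s).mulVec (fun i => (mm i : ℝ)) =
            (expT A s₀).mulVec (fun i => Int.fract (x i)) := by
          conv_lhs => rw [e2]
          rw [expT_add, ← Matrix.mulVec_mulVec, e1, ← hxv, ← Matrix.mulVec_add, hvec]
        refine Prod.ext ?_ ?_
        · show (expT A s₀).mulVec (fun i => Int.fract (x i)) = v + (expT A s).mulVec h.1
          exact efst.symm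
        · show s₀ = s + h.2
          have e3 : s + ((-nn : ℤ) : ℝ) = s₀ := by
            rw [hs₀, hnn, ← Int.self_sub_floor]
            push_cast
            ring
          exact e3.symm
    refine ⟨?_⟩
    have huniv : (Set.univ : Set (GA A ⧸ HH)) = QuotientGroup.mk '' K := by
      apply Set.eq_of_subset_of_subset ?_ (Set.subset_univ _)
      intro q _
      obtain ⟨g, rfl⟩ := QuotientGroup.mk_surjective q
      obtain ⟨xk, hxk, hmk⟩ := hsurj g
      exact ⟨xk, hxk, hmk⟩
    rw [huniv]
    exact hKc.image continuous_quotient_mk'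
end

section
/- Every real solvable Lie algebra of dimension 5 whose derived series satisfies 𝔤⁽¹⁾ ⊇ a 4-dimensional abelian ideal, and that is nilpotent with lower central series of length 4 (i.e., 𝔤⁴ ≠ 0, 𝔤⁵ = 0 in the lower central series), contains a 4-dimensional abelian ideal on which a generator acts as a single nilpotent Jordan block of size 4. -/
/-- A 5-dimensional real nilpotent Lie algebra containing a 4-dimensional abelian ideal,
whose lower central series has length 4 (`𝔤⁴ ≠ 0`, `𝔤⁵ = 0`), contains a 4-dimensional
abelian ideal on which a generator acts as a single nilpotent Jordan block of size 4. -/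
theorem stmt_17 (L : Type*) [LieRing L] [LieAlgebra ℝ L]
    (hdim : Module.finrank ℝ L = 5)
    (hsolv : LieAlgebra.IsSolvable L)
    (habelian : ∃ I : LieIdeal ℝ L, IsLieAbelian I ∧ Module.finrank ℝ I = 4)
    (h4 : LieModule.lowerCentralSeries ℝ L L 3 ≠ ⊥)
    (h5 : LieModule.lowerCentralSeries ℝ L L 4 = ⊥) :
    ∃ I : LieIdeal ℝ L, IsLieAbelian I ∧ Module.finrank ℝ I = 4 ∧
      ∃ (x : L) (b : Module.Basis (Fin 4) ℝ I), x ∉ I ∧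
        ⁅x, (b 0 : L)⁆ = 0 ∧
        ∀ i : Fin 3, ⁅x, (b i.succ : L)⁆ = (b i.castSucc : L) := by
  classical
  obtain ⟨I, hIab, hI4⟩ := habelian
  have hfd : FiniteDimensional ℝ L := Module.finite_of_finrank_pos (by rw [hdim]; norm_num)
  -- abelian-ness as a statement in L
  have hab' : ∀ i ∈ I, ∀ j ∈ I, ⁅i, j⁆ = (0 : L) := by
    intro i hi j hj
    have h := (LieSubmodule.lie_abelian_iff_lie_self_eq_bot I).mp hIab
    have hm : ⁅i, j⁆ ∈ (⁅I, I⁆ : LieIdeal ℝ L) := LieSubmodule.lie_mem_lie hi hj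
    rw [h] at hm
    simpa using hm
  -- choose x ∉ I
  obtain ⟨x, hx⟩ : ∃ x : L, x ∉ I := by
    by_contra h
    push_neg at h
    have hsub : I.toSubmodule = ⊤ := Submodule.eq_top_iff'.mpr h
    have hI4' : Module.finrank ℝ I.toSubmodule = 4 := hI4
    rw [hsub, finrank_top] at hI4'
    omega
  have hx0 : x ≠ 0 := fun h => hx (h ▸ I.zero_mem)
  -- span x ⊔ I = ⊤, hence every element decomposes
  have hsup : Submodule.span ℝ {x} ⊔ I.toSubmodule = ⊤ := by
    have hinf : Submodule.span ℝ {x} ⊓ I.toSubmodule = ⊥ := by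
      rw [Submodule.eq_bot_iff]
      rintro a ⟨ha1, ha2⟩
      obtain ⟨c, rfl⟩ := Submodule.mem_span_singleton.mp ha1
      rcases eq_or_ne c 0 with hc | hc
      · simp [hc]
      · exfalso
        have := I.toSubmodule.smul_mem c⁻¹ ha2
        rw [smul_smul, inv_mul_cancel₀ hc, one_smul] at this
        exact hx this
    apply Submodule.eq_top_of_finrank_eq
    have := Submodule.finrank_sup_add_finrank_inf_eq (Submodule.span ℝ {x}) I.toSubmodule
    rw [hinf, finrank_bot, finrank_span_singleton hx0] at this
    have hI4' : Module.finrank ℝ I.toSubmodule = 4 := hI4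
    omega
  have hdec : ∀ a : L, ∃ c : ℝ, ∃ i ∈ I, a = c • x + i := by
    intro a
    have : a ∈ Submodule.span ℝ {x} ⊔ I.toSubmodule := by rw [hsup]; trivial
    obtain ⟨y, hy, z, hz, rfl⟩ := Submodule.mem_sup.mp this
    obtain ⟨c, rfl⟩ := Submodule.mem_span_singleton.mp hy
    exact ⟨c, z, hz, rfl⟩
  -- the adjoint action of x
  set f : L →ₗ[ℝ] L := LieAlgebra.ad ℝ L x with hf
  have hfapp : ∀ a : L, f a = ⁅x, a⁆ := fun a => rfl
  have hpow_succ : ∀ (k : ℕ) (a : L), (f ^ (k + 1)) a = f ((f ^ k) a) := by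
    intro k a
    rw [pow_succ', Module.End.mul_apply]
  -- iterated brackets lie in the lower central series
  have hmem_lcs : ∀ (k : ℕ) (a : L), (f ^ k) a ∈ LieModule.lowerCentralSeries ℝ L L k := by
    intro k
    induction k with
    | zero => intro a; simp
    | succ k ih =>
      intro a
      rw [hpow_succ, LieModule.lowerCentralSeries_succ, hfapp]
      exact LieSubmodule.lie_mem_lie (LieSubmodule.mem_top _) (ih a)
  -- nilpotency of degree 4
  have h40 : ∀ a : L, (f ^ 4) a = 0 := by
    intro a
    have := hmem_lcs 4 a
    rw [h5] at this
    simpa using this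
  -- f maps I to I
  have hfI : ∀ a ∈ I, f a ∈ I := fun a ha => I.lie_mem ha
  have hfIk : ∀ (k : ℕ), ∀ a ∈ I, (f ^ k) a ∈ I := by
    intro k
    induction k with
    | zero => intro a ha; simpa using ha
    | succ k ih => intro a ha; rw [hpow_succ]; exact hfI _ (ih a ha)
  -- lower central series is contained in iterated images of I
  have key : ∀ k : ℕ, LieSubmodule.toSubmodule (LieModule.lowerCentralSeries ℝ L L (k + 1)) ≤
      Submodule.map (f ^ (k + 1)) I.toSubmodule := by
    intro k
    induction k with
    | zero =>
      rw [LieModule.lowerCentralSeries_succ, LieSubmodule.lieIdeal_oper_eq_linear_span']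
      rw [Submodule.span_le]
      rintro m ⟨a, -, b, -, rfl⟩
      obtain ⟨c, i, hi, rfl⟩ := hdec a
      obtain ⟨d, j, hj, rfl⟩ := hdec b
      refine ⟨c • j - d • i, I.toSubmodule.sub_mem (I.toSubmodule.smul_mem c hj)
        (I.toSubmodule.smul_mem d hi), ?_⟩
      rw [pow_one]
      simp only [hfapp, lie_add, add_lie, smul_lie, lie_smul, lie_self, smul_zero,
        map_sub, map_smul]
      rw [hab' i hi j hj]
      have hskew : ⁅i, x⁆ = -⁅x, i⁆ := by rw [← lie_skew]
      rw [hskew, lie_sub, lie_smul, lie_smul]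
      module
    | succ k ih =>
      rw [LieModule.lowerCentralSeries_succ, LieSubmodule.lieIdeal_oper_eq_linear_span']
      rw [Submodule.span_le]
      rintro m ⟨a, -, n, hn, rfl⟩
      obtain ⟨v, hv, rfl⟩ := ih hn
      obtain ⟨c, i, hi, rfl⟩ := hdec a
      have hnI : (f ^ (k + 1)) v ∈ I := hfIk _ v hv
      refine ⟨c • v, I.toSubmodule.smul_mem c hv, ?_⟩
      rw [map_smul, hpow_succ, hfapp]
      rw [add_lie, smul_lie, hab' i hi _ hnI, add_zero]
  -- pick v with f^3 v ≠ 0, v ∈ I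
  obtain ⟨m, hm, hm0⟩ : ∃ m, m ∈ LieModule.lowerCentralSeries ℝ L L 3 ∧ m ≠ 0 := by
    by_contra h
    push_neg at h
    exact h4 ((LieSubmodule.eq_bot_iff _).mpr h)
  obtain ⟨v, hvI0, hv3⟩ :=
    Submodule.mem_map.mp (key 2 ((LieSubmodule.mem_toSubmodule _).mpr hm))
  have hvI : v ∈ I := hvI0
  have hv30 : (f ^ 3) v ≠ 0 := hv3 ▸ hm0
  -- vanishing of high powers
  have hz : ∀ k : ℕ, 4 ≤ k → (f ^ k) v = 0 := by
    intro k hk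
    obtain ⟨j, rfl⟩ := Nat.exists_eq_add_of_le hk
    rw [pow_add, Module.End.mul_apply, h40]
  have hcomp : ∀ j k : ℕ, (f ^ j) ((f ^ k) v) = (f ^ (j + k)) v := by
    intro j k
    rw [← Module.End.mul_apply, ← pow_add]
  -- the candidate basis vectors
  set w : Fin 4 → I := fun i => ⟨(f ^ (3 - (i : ℕ))) v, hfIk _ v hvI⟩ with hw
  -- linear independence
  have hcoe : ∀ i : Fin 4, ((w i : L)) = (f ^ (3 - (i : ℕ))) v := fun i => rfl
  have hu : LinearIndependent ℝ (fun i : Fin 4 => ((w i : L))) := by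
    rw [Fintype.linearIndependent_iff]
    intro g hg
    simp only [hcoe] at hg
    rw [Fin.sum_univ_four] at hg
    have hg' : g 0 • (f ^ 3) v + g 1 • (f ^ 2) v + g 2 • (f ^ 1) v + g 3 • (f ^ 0) v = 0 := hg
    have e3 : g 3 = 0 := by
      have h := congrArg (⇑(f ^ 3)) hg'
      simp only [map_add, map_smul, map_zero, hcomp, pow_zero, Module.End.one_apply] at h
      norm_num at h
      rw [hz 6 (by norm_num), hz 5 (by norm_num), hz 4 (by norm_num)] at h
      simp only [smul_zero, zero_add, add_zero] at h
      exact (smul_eq_zero.mp h).resolve_right hv30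
    have e2 : g 2 = 0 := by
      have h := congrArg (⇑(f ^ 2)) hg'
      simp only [map_add, map_smul, map_zero, hcomp, pow_zero, Module.End.one_apply] at h
      norm_num at h
      rw [hz 5 (by norm_num), hz 4 (by norm_num), e3] at h
      simp only [smul_zero, zero_add, add_zero, zero_smul] at h
      exact (smul_eq_zero.mp h).resolve_right hv30
    have e1 : g 1 = 0 := by
      have h := congrArg (⇑(f ^ 1)) hg'
      simp only [map_add, map_smul, map_zero, hcomp, pow_zero, Module.End.one_apply] at h
      norm_num at h
      rw [hz 4 (by norm_num), e3, e2] at h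
      simp only [smul_zero, zero_add, add_zero, zero_smul] at h
      exact (smul_eq_zero.mp h).resolve_right hv30
    have e0 : g 0 = 0 := by
      rw [e1, e2, e3] at hg'
      simp only [zero_smul, add_zero] at hg'
      exact (smul_eq_zero.mp hg').resolve_right hv30
    intro i
    fin_cases i <;> assumption
  have hli : LinearIndependent ℝ w := by
    have : (fun i : Fin 4 => ((w i : L))) = (I.toSubmodule.subtype) ∘ w := rfl
    rw [this] at hu
    exact hu.of_comp _
  have hcard : Fintype.card (Fin 4) = Module.finrank ℝ I := by simp [hI4]
  refine ⟨I, hIab, hI4, x, basisOfLinearIndependentOfCardEqFinrank hli hcard, hx, ?_, ?_⟩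
  · rw [coe_basisOfLinearIndependentOfCardEqFinrank]
    show ⁅x, (f ^ (3 - ((0 : Fin 4) : ℕ))) v⁆ = 0
    rw [← hfapp, ← hpow_succ]
    exact hz _ (by norm_num)
  · intro i
    rw [coe_basisOfLinearIndependentOfCardEqFinrank]
    show ⁅x, (f ^ (3 - ((i.succ : Fin 4) : ℕ))) v⁆ = (f ^ (3 - ((i.castSucc : Fin 4) : ℕ))) v
    rw [← hfapp, ← hpow_succ]
    have hle : (i : ℕ) ≤ 2 := Nat.lt_succ_iff.mp i.isLt
    congr 1
    have h1 : ((i.succ : Fin 4) : ℕ) = (i : ℕ) + 1 := rfl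
    have h2 : ((i.castSucc : Fin 4) : ℕ) = (i : ℕ) := rfl
    rw [h1, h2]
    congr 1
    omega
end

section
/- Let α be a positive real number and let H_α = {(γ(s), e^{πit}, αs + t) : s, t ∈ ℝ} be the subgroup of G = SL₂~(ℝ) × S³ × ℝ, where γ : ℝ → SL₂~(ℝ) is a one-parameter subgroup projecting to rotations in PSL(2,ℝ) with γ(ℤ) equal to the center's image lattice, and t ↦ e^{πit} is a one-parameter subgroup of S³ = unit quaternions sending ℤ onto the center {±1}. Then H_α is a closed subgroup of G isomorphic to ℝ², and it is normal in γ(ℝ) × S¹ × ℝ. -/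
open Real

/-- The one-parameter subgroup `t ↦ e^{πit} = cos πt + i sin πt` of the group `S³` of
unit quaternions, sending `ℤ` onto the center `{±1}`. -/
noncomputable def epi (t : ℝ) : unitary (Quaternion ℝ) :=
  ⟨⟨Real.cos (π * t), Real.sin (π * t), 0, 0⟩, by
    have hn : Quaternion.normSq (⟨Real.cos (π * t), Real.sin (π * t), 0, 0⟩ : Quaternion ℝ)
        = 1 := by
      erw [Quaternion.normSq_def']
      simp [Real.cos_sq_add_sin_sq]
    erw [Unitary.mem_iff, Quaternion.star_mul_self, Quaternion.self_mul_star, hn]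
    simp⟩

lemma epi_coe (t : ℝ) :
    (epi t : Quaternion ℝ) = ⟨Real.cos (π * t), Real.sin (π * t), 0, 0⟩ := rfl

lemma epi_add (s t : ℝ) : epi (s + t) = epi s * epi t := by
  apply Subtype.ext
  rw [MulMemClass.coe_mul, epi_coe, epi_coe, epi_coe]
  have h : π * (s + t) = π * s + π * t := by ring
  erw [QuaternionAlgebra.mk_mul_mk]
  ext <;>
    simp [Quaternion.re_mul, Quaternion.imI_mul, Quaternion.imJ_mul, Quaternion.imK_mul,
      h, Real.cos_add, Real.sin_add] <;> ring

lemma epi_zero : epi 0 = 1 := by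
  apply Subtype.ext
  rw [epi_coe]
  ext <;> simp <;> rfl

lemma epi_neg (t : ℝ) : epi (-t) = (epi t)⁻¹ := by
  apply eq_inv_of_mul_eq_one_left
  rw [← epi_add]
  simp [epi_zero]

noncomputable def qI : Quaternion ℝ := ⟨0, 1, 0, 0⟩

lemma continuous_epi_coe : Continuous fun t : ℝ => ((epi t : Quaternion ℝ)) := by
  have key : (fun t : ℝ => ((epi t : Quaternion ℝ)))
      = fun t : ℝ => ((Real.cos (π * t) : ℝ) : Quaternion ℝ)
        + ((Real.sin (π * t) : ℝ) : Quaternion ℝ) * qI := by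
    funext t
    rw [epi_coe]
    ext <;>
      simp [Quaternion.re_mul, Quaternion.imI_mul, Quaternion.imJ_mul, Quaternion.imK_mul] <;> simp [qI]
  rw [key]
  have hc : Continuous fun t : ℝ => π * t := continuous_const.mul continuous_id
  exact ((Quaternion.continuous_coe.comp (Real.continuous_cos.comp hc)).add
    ((Quaternion.continuous_coe.comp (Real.continuous_sin.comp hc)).mul continuous_const))

lemma continuous_epi : Continuous epi :=
  continuous_epi_coe.subtype_mk _

/-- Let `G₁` play the role of the universal cover of `SL(2,ℝ)`, with
`γ : ℝ → G₁` the one-parameter subgroup lying over the rotations `SO(2)`, a closed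
embedding sending `ℤ` into the center.  For `α > 0`, the subgroup
`H_α = {(γ(s), e^{πit}, αs + t)}` of `G₁ × S³ × ℝ` is closed, isomorphic to `ℝ²`
(as a topological group), and normal in `γ(ℝ) × S¹ × ℝ`. -/
theorem stmt_19 (G₁ : Type*) [Group G₁] [TopologicalSpace G₁] [IsTopologicalGroup G₁]
    (γ : ℝ → G₁)
    (hγhom : ∀ s t : ℝ, γ (s + t) = γ s * γ t)
    (hγemb : Topology.IsClosedEmbedding γ)
    (hγcen : ∀ n : ℤ, γ (n : ℝ) ∈ Subgroup.center G₁)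
    (α : ℝ) (hα : 0 < α) :
    let S : Set (G₁ × unitary (Quaternion ℝ) × Multiplicative ℝ) :=
      {g | ∃ s t : ℝ, g = (γ s, epi t, Multiplicative.ofAdd (α * s + t))}
    (∃ H : Subgroup (G₁ × unitary (Quaternion ℝ) × Multiplicative ℝ),
      (H : Set (G₁ × unitary (Quaternion ℝ) × Multiplicative ℝ)) = S ∧
      IsClosed S ∧
      ∃ e : Multiplicative (ℝ × ℝ) ≃* H, Continuous e ∧ Continuous e.symm) ∧
    ∀ k ∈ (Set.range γ) ×ˢ (Set.range epi) ×ˢ (Set.univ : Set (Multiplicative ℝ)),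
      ∀ h ∈ S, k * h * k⁻¹ ∈ S := by
  intro S
  have hS : ∀ p : G₁ × unitary (Quaternion ℝ) × Multiplicative ℝ,
      p ∈ S ↔ ∃ s t : ℝ, p = (γ s, epi t, Multiplicative.ofAdd (α * s + t)) :=
    fun p => Iff.rfl
  -- basic facts about γ
  have hγ0 : γ 0 = 1 := by
    have h : γ 0 = γ 0 * γ 0 := by rw [← hγhom]; norm_num
    exact (right_eq_mul.mp h)
  have hγneg : ∀ s : ℝ, γ (-s) = (γ s)⁻¹ := by
    intro s
    apply eq_inv_of_mul_eq_one_left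
    rw [← hγhom]; simp [hγ0]
  have hγcomm : ∀ a s : ℝ, γ a * γ s = γ s * γ a := by
    intro a s; rw [← hγhom, ← hγhom, add_comm]
  have hecomm : ∀ a s : ℝ, epi a * epi s = epi s * epi a := by
    intro a s; rw [← epi_add, ← epi_add, add_comm]
  have memS : ∀ s t : ℝ, (γ s, epi t, Multiplicative.ofAdd (α * s + t)) ∈ S :=
    fun s t => (hS _).mpr ⟨s, t, rfl⟩
  let H : Subgroup (G₁ × unitary (Quaternion ℝ) × Multiplicative ℝ) :=
    { carrier := S
      mul_mem' := by
        intro a b ha hb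
        obtain ⟨s, t, rfl⟩ := (hS a).mp ha
        obtain ⟨s', t', rfl⟩ := (hS b).mp hb
        refine (hS _).mpr ⟨s + s', t + t', ?_⟩
        have h : α * (s + s') + (t + t') = (α * s + t) + (α * s' + t') := by ring
        rw [Prod.mk_mul_mk, Prod.mk_mul_mk, ← hγhom, ← epi_add, ← ofAdd_add, h]
      one_mem' := (hS _).mpr ⟨0, 0, by
        have h : α * (0 : ℝ) + 0 = 0 := by ring
        rw [h, ofAdd_zero, hγ0, epi_zero]
        rfl⟩
      inv_mem' := by
        intro a ha
        obtain ⟨s, t, rfl⟩ := (hS a).mp ha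
        refine (hS _).mpr ⟨-s, -t, ?_⟩
        have h : α * (-s) + (-t) = -(α * s + t) := by ring
        rw [Prod.inv_mk, Prod.inv_mk, hγneg, epi_neg, h, ofAdd_neg] }
  -- the homeomorphism ℝ ≃ range γ
  let ρ : ℝ ≃ₜ Set.range γ := hγemb.isEmbedding.toHomeomorph
  have hkey : ∀ s : ℝ, ρ.symm ⟨γ s, Set.mem_range_self s⟩ = s := fun s =>
    ρ.symm_apply_apply s
  have hval : ∀ x : Set.range γ, γ (ρ.symm x) = (x : G₁) := fun x =>
    congrArg Subtype.val (ρ.apply_symm_apply x)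
  -- closedness of S
  have hSclosed : IsClosed S := by
    let W : (Set.range γ) × (unitary (Quaternion ℝ) × Multiplicative ℝ) ≃ₜ
        ↥((Set.range γ) ×ˢ (Set.univ : Set (unitary (Quaternion ℝ) × Multiplicative ℝ))) :=
      ((Homeomorph.refl (Set.range γ)).prodCongr
        (Homeomorph.Set.univ (unitary (Quaternion ℝ) × Multiplicative ℝ)).symm).trans
        (Homeomorph.Set.prod _ _).symm
    have hincl : Topology.IsClosedEmbedding
        (fun q : (Set.range γ) × (unitary (Quaternion ℝ) × Multiplicative ℝ) =>
          (((q.1 : G₁), q.2) : G₁ × unitary (Quaternion ℝ) × Multiplicative ℝ)) := by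
      have h1 : Topology.IsClosedEmbedding
          (Subtype.val : ((Set.range γ) ×ˢ
            (Set.univ : Set (unitary (Quaternion ℝ) × Multiplicative ℝ))) →
            G₁ × unitary (Quaternion ℝ) × Multiplicative ℝ) :=
        (hγemb.isClosed_range.prod isClosed_univ).isClosedEmbedding_subtypeVal
      exact h1.comp W.isClosedEmbedding
    let C : Set ((Set.range γ) × (unitary (Quaternion ℝ) × Multiplicative ℝ)) :=
      {q | q.2.1 = epi (Multiplicative.toAdd q.2.2 - α * ρ.symm q.1)}
    have hC : IsClosed C := by
      apply isClosed_eq (continuous_fst.comp continuous_snd)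
      exact continuous_epi.comp
        ((continuous_toAdd.comp (continuous_snd.comp continuous_snd)).sub
          (continuous_const.mul (ρ.symm.continuous.comp continuous_fst)))
    have hSC : S = (fun q : (Set.range γ) × (unitary (Quaternion ℝ) × Multiplicative ℝ) =>
        (((q.1 : G₁), q.2) : G₁ × unitary (Quaternion ℝ) × Multiplicative ℝ)) '' C := by
      ext p
      rw [hS p]
      constructor
      · rintro ⟨s, t, rfl⟩
        refine ⟨(⟨γ s, Set.mem_range_self s⟩, epi t, Multiplicative.ofAdd (α * s + t)), ?_, rfl⟩
        show epi t = epi (Multiplicative.toAdd (Multiplicative.ofAdd (α * s + t))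
          - α * ρ.symm ⟨γ s, Set.mem_range_self s⟩)
        rw [hkey, toAdd_ofAdd]
        congr 1
        ring
      · rintro ⟨⟨x, y1, y2⟩, hqC, rfl⟩
        refine ⟨ρ.symm x, Multiplicative.toAdd y2 - α * ρ.symm x, ?_⟩
        have h3 : α * ρ.symm x + (Multiplicative.toAdd y2 - α * ρ.symm x)
            = Multiplicative.toAdd y2 := by ring
        rw [h3, ofAdd_toAdd, hval]
        have h2 : y1 = epi (Multiplicative.toAdd y2 - α * ρ.symm x) := hqC
        rw [← h2]
    rw [hSC]
    exact hincl.isClosedMap C hC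
  -- membership lemma
  have hmem : ∀ h : H, (h : G₁ × unitary (Quaternion ℝ) × Multiplicative ℝ).1
      ∈ Set.range γ := by
    rintro ⟨h, hh⟩
    obtain ⟨s, t, hst⟩ := (hS h).mp hh
    exact ⟨s, congrArg Prod.fst hst.symm⟩
  have hrecon : ∀ p : G₁ × unitary (Quaternion ℝ) × Multiplicative ℝ, p ∈ S →
      ∀ hp : p.1 ∈ Set.range γ,
      (γ (ρ.symm ⟨p.1, hp⟩),
        epi (Multiplicative.toAdd p.2.2 - α * ρ.symm ⟨p.1, hp⟩),
        Multiplicative.ofAdd (α * ρ.symm ⟨p.1, hp⟩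
          + (Multiplicative.toAdd p.2.2 - α * ρ.symm ⟨p.1, hp⟩))) = p := by
    intro p hpS hp
    obtain ⟨s, t, rfl⟩ := (hS p).mp hpS
    have hA : ρ.symm ⟨(γ s, epi t, Multiplicative.ofAdd (α * s + t)).1, hp⟩ = s := hkey s
    rw [hA, toAdd_ofAdd]
    have h1 : α * s + t - α * s = t := by ring
    rw [h1]
  refine ⟨⟨H, rfl, hSclosed, ?_⟩, ?_⟩
  · refine ⟨{
      toFun := fun x => ⟨(γ x.toAdd.1, epi x.toAdd.2,
        Multiplicative.ofAdd (α * x.toAdd.1 + x.toAdd.2)), memS _ _⟩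
      invFun := fun h => Multiplicative.ofAdd
        (ρ.symm ⟨(h : G₁ × unitary (Quaternion ℝ) × Multiplicative ℝ).1, hmem h⟩,
        Multiplicative.toAdd (h : G₁ × unitary (Quaternion ℝ) × Multiplicative ℝ).2.2
          - α * ρ.symm ⟨(h : G₁ × unitary (Quaternion ℝ) × Multiplicative ℝ).1, hmem h⟩)
      left_inv := ?_
      right_inv := ?_
      map_mul' := ?_ }, ?_, ?_⟩
    · intro x
      simp only [toAdd_ofAdd, hkey]
      have h : α * x.toAdd.1 + x.toAdd.2 - α * x.toAdd.1 = x.toAdd.2 := by ring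
      rw [h]
      exact ofAdd_toAdd x
    · exact fun h => Subtype.ext (hrecon h.val h.2 (hmem h))
    · intro x y
      apply Subtype.ext
      show (γ ((x * y).toAdd.1), epi ((x * y).toAdd.2),
          Multiplicative.ofAdd (α * (x * y).toAdd.1 + (x * y).toAdd.2)) = _
      rw [toAdd_mul, Prod.fst_add, Prod.snd_add, hγhom, epi_add]
      have h : α * (x.toAdd.1 + y.toAdd.1) + (x.toAdd.2 + y.toAdd.2)
          = (α * x.toAdd.1 + x.toAdd.2) + (α * y.toAdd.1 + y.toAdd.2) := by ring
      rw [h, ofAdd_add]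
      rfl
    · apply Continuous.subtype_mk
      refine Continuous.prodMk ?_ (Continuous.prodMk ?_ ?_)
      · exact hγemb.continuous.comp (continuous_fst.comp continuous_toAdd)
      · exact continuous_epi.comp (continuous_snd.comp continuous_toAdd)
      · exact continuous_ofAdd.comp
          (((continuous_const.mul (continuous_fst.comp continuous_toAdd))).add
            (continuous_snd.comp continuous_toAdd))
    · apply continuous_ofAdd.comp
      have c1 : Continuous fun h : H =>
          ρ.symm ⟨(h : G₁ × unitary (Quaternion ℝ) × Multiplicative ℝ).1, hmem h⟩ :=
        ρ.symm.continuous.comp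
          (Continuous.subtype_mk (continuous_fst.comp continuous_subtype_val) hmem)
      refine Continuous.prodMk c1 ?_
      exact (continuous_toAdd.comp
        ((continuous_snd.comp continuous_snd).comp continuous_subtype_val)).sub
        (continuous_const.mul c1)
  · rintro k hk h hh
    obtain ⟨s, t, rfl⟩ := (hS h).mp hh
    obtain ⟨⟨a, ha⟩, ⟨b, hb⟩, -⟩ := hk
    obtain ⟨k1, k2, k3⟩ := k
    have ha' : γ a = k1 := ha
    have hb' : epi b = k2 := hb
    have e1 : k1 * γ s * k1⁻¹ = γ s := by
      rw [← ha', hγcomm, mul_inv_cancel_right]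
    have e2 : k2 * epi t * k2⁻¹ = epi t := by
      rw [← hb', hecomm, mul_inv_cancel_right]
    have e3 : k3 * Multiplicative.ofAdd (α * s + t) * k3⁻¹
        = Multiplicative.ofAdd (α * s + t) := by
      rw [mul_comm k3, mul_inv_cancel_right]
    refine (hS _).mpr ⟨s, t, ?_⟩
    rw [Prod.mk_mul_mk, Prod.mk_mul_mk, Prod.inv_mk, Prod.inv_mk,
      Prod.mk_mul_mk, Prod.mk_mul_mk, e1, e2, e3]
end
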